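/- Let F be the simple graph with vertex set {v₁, v₂, v₃, v₄, v₅, v₆} and edge set {v₁v₂, v₁v₃, v₁v₄, v₁v₅, v₁v₆, v₂v₃, v₂v₄, v₅v₆}. Then F is a polar graph, but the disjoint union of two vertex-disjoint copies of F is not a polar graph. -/

import Mathlib

/-- `v` and `w` lie in `S` and are joined by a path inside the induced subgraph `G[S]`. -/
def InducedReach {V : Type*} (G : SimpleGraph V) (S : Set V) (v w : V) : Prop :=
  ∃ (hv : v ∈ S) (hw : w ∈ S), (G.induce S).Reachable ⟨v, hv⟩ ⟨w, hw⟩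

/-- `S` is a cluster set of `G`: every connected component of `G[S]` is a complete graph, i.e.
any two distinct vertices in the same component of `G[S]` are adjacent. -/
def IsClusterSet {V : Type*} (G : SimpleGraph V) (S : Set V) : Prop :=
  ∀ v w, InducedReach G S v w → v ≠ w → G.Adj v w

/-- `G` is a polar graph: its vertex set can be partitioned into a cluster set `S` and a
co-cluster set `Sᶜ` (a cluster set of the complement graph). -/
def IsPolar {V : Type*} (G : SimpleGraph V) : Prop :=
  ∃ S : Set V, IsClusterSet G S ∧ IsClusterSet Gᶜ Sᶜ

/-- The disjoint union of `ℓ` copies of the graph `F`. -/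
def copies {W : Type*} (F : SimpleGraph W) (ℓ : ℕ) : SimpleGraph (Fin ℓ × W) where
  Adj p q := p.1 = q.1 ∧ F.Adj p.2 q.2
  symm := ⟨fun _ _ h => ⟨h.1.symm, h.2.symm⟩⟩
  loopless := ⟨fun p h => F.irrefl h.2⟩

/-- The graph `F` on six vertices `v₁, …, v₆` (here `0, …, 5`) with edge set
`{v₁v₂, v₁v₃, v₁v₄, v₁v₅, v₁v₆, v₂v₃, v₂v₄, v₅v₆}`. -/
def Fgraph : SimpleGraph (Fin 6) :=
  SimpleGraph.fromEdgeSet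
    {s(0, 1), s(0, 2), s(0, 3), s(0, 4), s(0, 5), s(1, 2), s(1, 3), s(4, 5)}

/-! ### Auxiliary machinery -/

/-- `S` satisfies the "triangle condition" in `G` (no induced `P₃` inside `S`). -/
def TriCond {V : Type*} (G : SimpleGraph V) (S : Set V) : Prop :=
  ∀ u v w, u ∈ S → v ∈ S → w ∈ S → G.Adj u v → G.Adj v w → u ≠ w → G.Adj u w

lemma isClusterSet_of_tri {V : Type*} {G : SimpleGraph V} {S : Set V}
    (h : TriCond G S) : IsClusterSet G S := by
  have key : ∀ (a b : S), (G.induce S).Reachable a b → (a : V) = b ∨ G.Adj a b := by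
    intro a b hr
    obtain ⟨p⟩ := hr
    induction p with
    | nil => exact Or.inl rfl
    | @cons a x b h' p ih =>
      have hax : G.Adj a x := by simpa using h'
      rcases ih with h1 | h1
      · exact Or.inr (h1 ▸ hax)
      · by_cases hab : (a : V) = b
        · exact Or.inl hab
        · exact Or.inr (h a x b a.2 x.2 b.2 hax h1 hab)
  intro v w ⟨hv, hw, hr⟩ hne
  rcases key ⟨v, hv⟩ ⟨w, hw⟩ hr with h1 | h1
  · exact absurd h1 hne
  · exact h1

lemma tri_of_isClusterSet {V : Type*} {G : SimpleGraph V} {S : Set V}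
    (h : IsClusterSet G S) : TriCond G S := by
  intro u v w hu hv hw h1 h2 hne
  refine h u w ⟨hu, hw, ?_⟩ hne
  have a1 : (G.induce S).Adj ⟨u, hu⟩ ⟨v, hv⟩ := by simpa using h1
  have a2 : (G.induce S).Adj ⟨v, hv⟩ ⟨w, hw⟩ := by simpa using h2
  exact ⟨SimpleGraph.Walk.cons a1 (SimpleGraph.Walk.cons a2 SimpleGraph.Walk.nil)⟩

/-- Boolean adjacency function for `Fgraph`. -/
def fadj (a b : Fin 6) : Bool :=
  ((a, b) ∈ [((0:Fin 6),(1:Fin 6)), (0,2), (0,3), (0,4), (0,5), (1,2), (1,3), (4,5)]) ||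
  ((b, a) ∈ [((0:Fin 6),(1:Fin 6)), (0,2), (0,3), (0,4), (0,5), (1,2), (1,3), (4,5)])

lemma fadj_iff : ∀ a b, Fgraph.Adj a b ↔ fadj a b = true := by
  intro a b
  simp only [Fgraph, SimpleGraph.fromEdgeSet_adj, Set.mem_insert_iff, Set.mem_singleton_iff,
    Sym2.eq_iff]
  revert a b
  decide

/-- Boolean adjacency function for the complement of `Fgraph`. -/
def fcadj (a b : Fin 6) : Bool := (a != b) && !(fadj a b)

lemma fcadj_iff : ∀ a b, Fgraphᶜ.Adj a b ↔ fcadj a b = true := by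
  intro a b
  rw [SimpleGraph.compl_adj]
  simp [fcadj, fadj_iff, Bool.and_eq_true, Bool.not_eq_true', bne_iff_ne]

lemma triCond_of_bool {G : SimpleGraph (Fin 6)} {adjb : Fin 6 → Fin 6 → Bool}
    (hadj : ∀ a b, G.Adj a b ↔ adjb a b = true) (p : Fin 6 → Bool)
    (H : ∀ u v w, p u = true → p v = true → p w = true →
      adjb u v = true → adjb v w = true → u ≠ w → adjb u w = true) :
    TriCond G {x | p x = true} := by
  intro u v w hu hv hw h1 h2 hne
  rw [hadj]
  exact H u v w hu hv hw ((hadj u v).1 h1) ((hadj v w).1 h2) hne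

/-- `Fgraph` admits no partition into a cluster part and an independent part. -/
lemma factb : ∀ p : Fin 6 → Bool,
    (∀ u v w, p u = true → p v = true → p w = true →
      fadj u v = true → fadj v w = true → u ≠ w → fadj u w = true) →
    (∀ u v, p u = false → p v = false → fadj u v = false) → False := by
  decide

/-! ### The main theorem -/

theorem stmt_15 : IsPolar Fgraph ∧ ¬ IsPolar (copies Fgraph 2) := by
  constructor
  · -- `Fgraph` is polar with cluster part `{0, 4, 5}`.
    refine ⟨{x | (fun x : Fin 6 => decide (x = 0 ∨ x = 4 ∨ x = 5)) x = true}, ?_, ?_⟩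
    · exact isClusterSet_of_tri (triCond_of_bool fadj_iff _ (by decide))
    · have hC : ({x | (fun x : Fin 6 => decide (x = 0 ∨ x = 4 ∨ x = 5)) x = true} : Set (Fin 6))ᶜ
          = {x | (fun x : Fin 6 => !(decide (x = 0 ∨ x = 4 ∨ x = 5))) x = true} := by
        ext x; simp
      rw [hC]
      exact isClusterSet_of_tri (triCond_of_bool fcadj_iff _ (by decide))
  · rintro ⟨S, hS, hSc⟩
    have T1 := tri_of_isClusterSet hS
    have T2 := tri_of_isClusterSet hSc
    -- the trace of `S` in each copy satisfies the triangle condition in `Fgraph`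
    have Tcopy : ∀ i : Fin 2, TriCond Fgraph {x | (i, x) ∈ S} := by
      intro i u v w hu hv hw h1 h2 hne
      have := T1 (i, u) (i, v) (i, w) hu hv hw ⟨rfl, h1⟩ ⟨rfl, h2⟩
        (fun h => hne (congrArg Prod.snd h))
      exact this.2
    -- the complement of `S` meets each copy (otherwise all of `Fgraph` would be a cluster set)
    have notuniv : ∀ i : Fin 2, ∃ z, (i, z) ∉ S := by
      intro i
      by_contra hc
      push_neg at hc
      have h24 := Tcopy i 2 0 4 (hc 2) (hc 0) (hc 4)
        ((fadj_iff 2 0).2 (by decide)) ((fadj_iff 0 4).2 (by decide)) (by decide)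
      exact absurd ((fadj_iff 2 4).1 h24) (by decide)
    -- the complement of `S` is independent inside each copy
    have indep : ∀ i : Fin 2, ∀ x y : Fin 6, (i, x) ∉ S → (i, y) ∉ S → ¬ Fgraph.Adj x y := by
      intro i x y hx hy hadj
      have hji : (1 - i) ≠ i := by fin_cases i <;> decide
      obtain ⟨z, hz⟩ := notuniv (1 - i)
      have e1 : ((copies Fgraph 2)ᶜ).Adj (i, x) (1 - i, z) := by
        rw [SimpleGraph.compl_adj]
        refine ⟨fun h => hji (congrArg Prod.fst h).symm, fun hc => hji (hc.1).symm⟩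
      have e2 : ((copies Fgraph 2)ᶜ).Adj (1 - i, z) (i, y) := by
        rw [SimpleGraph.compl_adj]
        refine ⟨fun h => hji (congrArg Prod.fst h), fun hc => hji hc.1⟩
      have hne : ((i, x) : Fin 2 × Fin 6) ≠ (i, y) :=
        fun h => hadj.ne (congrArg Prod.snd h)
      have := T2 (i, x) (1 - i, z) (i, y) hx hz hy e1 e2 hne
      rw [SimpleGraph.compl_adj] at this
      exact this.2 ⟨rfl, hadj⟩
    -- now specialize to copy `0` and contradict `factb`
    classical
    set p : Fin 6 → Bool := fun x => decide ((0, x) ∈ S) with hpdef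
    have hp : ∀ x, p x = true ↔ ((0 : Fin 2), x) ∈ S := fun x => decide_eq_true_iff
    refine factb p ?_ ?_
    · intro u v w hu hv hw h1 h2 hne
      exact (fadj_iff u w).1 (Tcopy 0 u v w ((hp u).1 hu) ((hp v).1 hv) ((hp w).1 hw)
        ((fadj_iff u v).2 h1) ((fadj_iff v w).2 h2) hne)
    · intro u v hu hv
      have hu' : ((0 : Fin 2), u) ∉ S := fun h => by simp [(hp u).2 h] at hu
      have hv' : ((0 : Fin 2), v) ∉ S := fun h => by simp [(hp v).2 h] at hv
      cases h : fadj u v with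
      | false => rfl
      | true => exact absurd ((fadj_iff u v).2 h) (indep 0 u v hu' hv')
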